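/- Let F be an algebraically closed field of characteristic p > 0 with p odd (so that -1 ≠ 1 and F is infinite). Then GL(n, F) is not acceptable for any n ≥ 2. -/

import Mathlib

/-- A group `G` is *acceptable* if for every finite group `H`, any two element-conjugate
homomorphisms `H → G` are globally conjugate. -/
def IsAcceptable (G : Type*) [Group G] : Prop :=
  ∀ (H : Type) (_ : Group H) (_ : Finite H) (φ₁ φ₂ : H →* G),
    (∀ h : H, ∃ g : G, g * φ₁ h * g⁻¹ = φ₂ h) →
    ∃ g : G, ∀ h : H, g * φ₁ h * g⁻¹ = φ₂ h

section Aux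

open Matrix

variable {n : ℕ} {F : Type} [Field F]

/-- Unit `1 + t • E` for a square-zero matrix `E`. -/
def nilUnit (E : Matrix (Fin n) (Fin n) F) (hE : E * E = 0) (t : F) : GL (Fin n) F where
  val := 1 + t • E
  inv := 1 - t • E
  val_inv := by
    have h : (t • E) * (t • E) = 0 := by
      rw [Matrix.smul_mul, Matrix.mul_smul, hE, smul_zero, smul_zero]
    simp only [mul_sub, sub_mul, mul_add, add_mul, one_mul, mul_one, h]
    abel
  inv_val := by
    have h : (t • E) * (t • E) = 0 := by
      rw [Matrix.smul_mul, Matrix.mul_smul, hE, smul_zero, smul_zero]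
    simp only [mul_sub, sub_mul, mul_add, add_mul, one_mul, mul_one, h]
    abel

@[simp] lemma nilUnit_val (E : Matrix (Fin n) (Fin n) F) (hE : E * E = 0) (t : F) :
    (nilUnit E hE t : Matrix (Fin n) (Fin n) F) = 1 + t • E := rfl

lemma nilUnit_mul (E : Matrix (Fin n) (Fin n) F) (hE : E * E = 0) (s t : F) :
    nilUnit E hE s * nilUnit E hE t = nilUnit E hE (s + t) := by
  refine Units.ext ?_
  show (1 + s • E) * (1 + t • E) = 1 + (s + t) • E
  have h : (s • E) * (t • E) = 0 := by
    rw [Matrix.smul_mul, Matrix.mul_smul, hE, smul_zero, smul_zero]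
  simp only [mul_add, add_mul, one_mul, mul_one, h, add_smul]
  abel

lemma nilUnit_zero (E : Matrix (Fin n) (Fin n) F) (hE : E * E = 0) :
    nilUnit E hE 0 = 1 := by
  refine Units.ext ?_
  show (1 : Matrix (Fin n) (Fin n) F) + (0:F) • E = 1
  simp

end Aux

theorem GL_not_acceptable (F : Type) [Field F] [IsAlgClosed F] (p : ℕ) [Fact p.Prime]
    [CharP F p] (hp : p ≠ 2) (n : ℕ) (hn : 2 ≤ n) : ¬ IsAcceptable (GL (Fin n) F) := by
  intro hacc
  classical
  -- indices
  set i0 : Fin n := ⟨0, by omega⟩ with hi0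
  set i1 : Fin n := ⟨1, by omega⟩ with hi1
  have h01 : i0 ≠ i1 := by simp [hi0, hi1, Fin.ext_iff]
  set E : Matrix (Fin n) (Fin n) F := Matrix.single i0 i1 1 with hEdef
  have hEE : E * E = 0 := Matrix.single_mul_single_of_ne (1 : F) i0 i1 i0 h01.symm 1
  have hEne : E ≠ 0 := by
    intro h
    have := congrFun (congrFun h i0) i1
    simp [hEdef, Matrix.single] at this
  -- embedding of the prime field
  let f : ZMod p →+* F := ZMod.castHom (dvd_refl p) F
  have hf : Function.Injective f := f.injective
  -- choose b outside the prime field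
  obtain ⟨b, hb⟩ : ∃ b : F, b ∉ Set.range f := by
    obtain ⟨b, hb⟩ := (Set.finite_range (f : ZMod p → F)).infinite_compl.nonempty
    exact ⟨b, hb⟩
  have hb1 : b ≠ 1 := fun h => hb ⟨1, by simp [h]⟩
  have hbm1 : b ≠ -1 := fun h => hb ⟨-1, by simp [h]⟩
  -- zero criteria for linear forms
  have key1 : ∀ x y : ZMod p, f x + b * f y = 0 → x = 0 ∧ y = 0 := by
    intro x y h
    by_cases hy : y = 0
    · subst hy
      simp only [map_zero, mul_zero, add_zero] at h
      exact ⟨hf (by simpa using h), rfl⟩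
    · exfalso
      have hfy : f y ≠ 0 := fun h0 => hy (hf (by simpa using h0))
      apply hb
      refine ⟨-x / y, ?_⟩
      rw [map_div₀, map_neg, div_eq_iff hfy]
      linear_combination -h
  have key2 : ∀ x y : ZMod p, b * f x + f y = 0 → x = 0 ∧ y = 0 := by
    intro x y h
    by_cases hx : x = 0
    · subst hx
      simp only [map_zero, mul_zero, zero_add] at h
      exact ⟨rfl, hf (by simpa using h)⟩
    · exfalso
      have hfx : f x ≠ 0 := fun h0 => hx (hf (by simpa using h0))
      apply hb
      refine ⟨-y / x, ?_⟩
      rw [map_div₀, map_neg, div_eq_iff hfx]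
      linear_combination -h
  -- the two homomorphisms
  let mk : F → F → (Multiplicative (ZMod p × ZMod p) →* GL (Fin n) F) := fun a c =>
    MonoidHom.mk' (fun h => nilUnit E hEE (a * f h.toAdd.1 + c * f h.toAdd.2))
      (by
        intro h1 h2
        rw [nilUnit_mul]
        congr 1
        simp only [toAdd_mul, Prod.fst_add, Prod.snd_add, map_add]
        ring)
  let φ₁ := mk 1 b
  let φ₂ := mk b 1
  -- conjugating nonzero unipotents
  have conj : ∀ s t : F, s ≠ 0 → t ≠ 0 →
      ∃ g : GL (Fin n) F, g * nilUnit E hEE s * g⁻¹ = nilUnit E hEE t := by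
    intro s t hs ht
    set v : Fin n → F := fun i => if i = i0 then t / s else 1 with hv
    have hvne : ∀ i, v i ≠ 0 := by
      intro i
      rw [hv]
      dsimp only
      split
      · exact div_ne_zero ht hs
      · exact one_ne_zero
    have hw1 : (fun i => v i * (v i)⁻¹) = (1 : Fin n → F) :=
      funext fun i => mul_inv_cancel₀ (hvne i)
    have hw2 : (fun i => (v i)⁻¹ * v i) = (1 : Fin n → F) :=
      funext fun i => inv_mul_cancel₀ (hvne i)
    have hvv : Matrix.diagonal v * Matrix.diagonal (fun i => (v i)⁻¹) = 1 := by
      rw [Matrix.diagonal_mul_diagonal, hw1]; exact Matrix.diagonal_one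
    have hvv' : Matrix.diagonal (fun i => (v i)⁻¹) * Matrix.diagonal v = 1 := by
      rw [Matrix.diagonal_mul_diagonal, hw2]; exact Matrix.diagonal_one
    refine ⟨⟨Matrix.diagonal v, Matrix.diagonal (fun i => (v i)⁻¹), hvv, hvv'⟩, ?_⟩
    refine Units.ext ?_
    show Matrix.diagonal v * (1 + s • E) * Matrix.diagonal (fun i => (v i)⁻¹) = 1 + t • E
    have hpart : Matrix.diagonal v * (s • E) * Matrix.diagonal (fun i => (v i)⁻¹) = t • E := by
      ext a c
      rw [Matrix.mul_diagonal, Matrix.diagonal_mul]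
      by_cases ha : a = i0
      · by_cases hc : c = i1
        · subst ha; subst hc
          simp only [hEdef, Matrix.smul_apply, Matrix.single, Matrix.of_apply,
            and_self, if_true, smul_eq_mul, mul_one, hv, if_pos rfl, if_neg h01.symm]
          field_simp
        · have hz : E a c = 0 := by
            have : ¬ (i0 = a ∧ i1 = c) := fun hcon => hc hcon.2.symm
            simp [hEdef, Matrix.single, this]
          simp [Matrix.smul_apply, hz]
      · have hz : E a c = 0 := by
          have : ¬ (i0 = a ∧ i1 = c) := fun hcon => ha hcon.1.symm
          simp [hEdef, Matrix.single, this]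
        simp [Matrix.smul_apply, hz]
    rw [mul_add, add_mul, mul_one, hvv, hpart]
  have hcond : ∀ h, ∃ g : GL (Fin n) F, g * φ₁ h * g⁻¹ = φ₂ h := by
    intro h
    have hφ1 : φ₁ h = nilUnit E hEE (1 * f h.toAdd.1 + b * f h.toAdd.2) := rfl
    have hφ2 : φ₂ h = nilUnit E hEE (b * f h.toAdd.1 + 1 * f h.toAdd.2) := rfl
    by_cases hs : (1:F) * f h.toAdd.1 + b * f h.toAdd.2 = 0
    · have hxy := key1 h.toAdd.1 h.toAdd.2 (by linear_combination hs)
      have h2 : b * f h.toAdd.1 + 1 * f h.toAdd.2 = 0 := by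
        rw [hxy.1, hxy.2, map_zero]
        ring
      refine ⟨1, ?_⟩
      rw [hφ1, hφ2, hs, h2]
      simp
    · have ht : b * f h.toAdd.1 + 1 * f h.toAdd.2 ≠ 0 := by
        intro h0
        obtain ⟨hx0, hy0⟩ := key2 h.toAdd.1 h.toAdd.2 (by linear_combination h0)
        apply hs
        rw [hx0, hy0, map_zero]
        ring
      obtain ⟨g, hg⟩ := conj _ _ hs ht
      exact ⟨g, by rw [hφ1, hφ2]; exact hg⟩
  obtain ⟨g, hg⟩ := hacc (Multiplicative (ZMod p × ZMod p)) inferInstance inferInstance φ₁ φ₂ hcond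
  -- evaluate at the two generators
  have e1 : g * nilUnit E hEE 1 * g⁻¹ = nilUnit E hEE b := by
    have h1 : φ₁ (Multiplicative.ofAdd ((1:ZMod p), (0:ZMod p))) = nilUnit E hEE 1 := by
      show nilUnit E hEE (1 * f 1 + b * f 0) = _
      congr 1
      rw [map_one, map_zero]
      ring
    have h2 : φ₂ (Multiplicative.ofAdd ((1:ZMod p), (0:ZMod p))) = nilUnit E hEE b := by
      show nilUnit E hEE (b * f 1 + 1 * f 0) = _
      congr 1
      rw [map_one, map_zero]
      ring
    rw [← h1, ← h2]
    exact hg _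
  have e2 : g * nilUnit E hEE b * g⁻¹ = nilUnit E hEE 1 := by
    have h1 : φ₁ (Multiplicative.ofAdd ((0:ZMod p), (1:ZMod p))) = nilUnit E hEE b := by
      show nilUnit E hEE (1 * f 0 + b * f 1) = _
      congr 1
      rw [map_one, map_zero]
      ring
    have h2 : φ₂ (Multiplicative.ofAdd ((0:ZMod p), (1:ZMod p))) = nilUnit E hEE 1 := by
      show nilUnit E hEE (b * f 0 + 1 * f 1) = _
      congr 1
      rw [map_one, map_zero]
      ring
    rw [← h1, ← h2]
    exact hg _
  -- turn into matrix identities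
  have unconj : ∀ s t : F, g * nilUnit E hEE s * g⁻¹ = nilUnit E hEE t →
      s • ((g : Matrix (Fin n) (Fin n) F) * E) = t • (E * (g : Matrix (Fin n) (Fin n) F)) := by
    intro s t hst
    have h' : (g : Matrix (Fin n) (Fin n) F) * (1 + s • E) = (1 + t • E) * g := by
      have hval := congrArg Units.val hst
      rw [Units.val_mul, Units.val_mul] at hval
      have := congrArg (fun M => M * (g : Matrix (Fin n) (Fin n) F)) hval
      rw [mul_assoc, mul_assoc] at this
      rw [Units.inv_mul, mul_one] at this
      simpa [nilUnit_val] using this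
    rw [mul_add, add_mul, mul_one, one_mul] at h'
    have := add_left_cancel (a := (g : Matrix (Fin n) (Fin n) F))
      (by rw [h'] : (g : Matrix (Fin n) (Fin n) F) + (g : Matrix (Fin n) (Fin n) F) * (s • E)
        = (g : Matrix (Fin n) (Fin n) F) + (t • E) * (g : Matrix (Fin n) (Fin n) F))
    rw [Matrix.mul_smul, Matrix.smul_mul] at this
    exact this
  have m1 := unconj 1 b e1
  have m2 := unconj b 1 e2
  rw [one_smul] at m1 m2
  have hgE : (g : Matrix (Fin n) (Fin n) F) * E ≠ 0 := by
    intro h0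
    apply hEne
    calc E = ((g⁻¹ : GL (Fin n) F) : Matrix (Fin n) (Fin n) F)
        * ((g : Matrix (Fin n) (Fin n) F) * E) := by
          rw [← mul_assoc, Units.inv_mul, one_mul]
      _ = 0 := by rw [h0, mul_zero]
  have hcollapse : (g : Matrix (Fin n) (Fin n) F) * E
      = (b * b) • ((g : Matrix (Fin n) (Fin n) F) * E) := by
    rw [mul_smul, m2, ← m1]
  have hb2 : b * b = 1 := by
    by_contra hb2
    have h0 : (1 - b * b) • ((g : Matrix (Fin n) (Fin n) F) * E) = 0 := by
      rw [sub_smul, one_smul, ← hcollapse, sub_self]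
    rcases smul_eq_zero.mp h0 with h | h
    · exact hb2 (sub_eq_zero.mp h).symm
    · exact hgE h
  rcases mul_self_eq_one_iff.mp hb2 with h | h
  · exact hb1 h
  · exact hbm1 h
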